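/- Let X be a finite group possessing a Hall π-subgroup, and let M be a normal subgroup of X. Then M possesses a Hall π-subgroup. -/

import Mathlib

/-- A Hall π-subgroup: every prime divisor of its order lies in π,
and its index is coprime to every prime in π. -/
def IsHallPi (π : Set ℕ) {G : Type*} [Group G] (H : Subgroup G) : Prop :=
  (∀ p : ℕ, p.Prime → p ∣ Nat.card H → p ∈ π) ∧
  (∀ p ∈ π, p.Prime → ¬ p ∣ H.index)

lemma card_subgroupOf_eq {G : Type*} [Group G] (A B : Subgroup G) :
    Nat.card (A.subgroupOf B) = Nat.card ↥(A ⊓ B) := by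
  rw [← Subgroup.inf_subgroupOf_right]
  exact Nat.card_congr (Subgroup.subgroupOfEquivOfLe inf_le_right).toEquiv

lemma relindex_mul_card_inf {G : Type*} [Group G] (A B : Subgroup G) :
    A.relIndex B * Nat.card ↥(A ⊓ B) = Nat.card B := by
  rw [Subgroup.relIndex, ← card_subgroupOf_eq, Subgroup.index_mul_card]

lemma relindex_eq_relindex_sup {G : Type*} [Group G] [Finite G]
    (H M : Subgroup G) [M.Normal] : H.relIndex M = H.relIndex (H ⊔ M) := by
  have hi : 0 < Nat.card ↥(H ⊓ M) := Nat.card_pos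
  have ha : 0 < Nat.card H := Nat.card_pos
  have hinfHM : Nat.card ↥(M ⊓ H) = Nat.card ↥(H ⊓ M) := by rw [inf_comm]
  have eq1 : H.relIndex M * Nat.card ↥(H ⊓ M) = Nat.card M := relindex_mul_card_inf H M
  have eq2 : H.relIndex (H ⊔ M) * Nat.card H = Nat.card ↥(H ⊔ M) := by
    have := relindex_mul_card_inf H (H ⊔ M)
    rwa [inf_eq_left.mpr le_sup_left] at this
  have eq3 : M.relIndex H * Nat.card ↥(H ⊓ M) = Nat.card H := by
    have := relindex_mul_card_inf M H
    rwa [hinfHM] at this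
  have eq4 : M.relIndex H * Nat.card M = Nat.card ↥(H ⊔ M) := by
    have := relindex_mul_card_inf M (H ⊔ M)
    rwa [inf_eq_left.mpr le_sup_right, Subgroup.relIndex_sup_right] at this
  have hn : 0 < M.relIndex H := by
    rcases Nat.eq_zero_or_pos (M.relIndex H) with h | h
    · rw [h, zero_mul] at eq3; omega
    · exact h
  have key : H.relIndex M * (M.relIndex H * Nat.card ↥(H ⊓ M)) =
      H.relIndex (H ⊔ M) * (M.relIndex H * Nat.card ↥(H ⊓ M)) := by
    calc H.relIndex M * (M.relIndex H * Nat.card ↥(H ⊓ M))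
        = M.relIndex H * (H.relIndex M * Nat.card ↥(H ⊓ M)) := by ring
      _ = M.relIndex H * Nat.card M := by rw [eq1]
      _ = Nat.card ↥(H ⊔ M) := eq4
      _ = H.relIndex (H ⊔ M) * Nat.card H := eq2.symm
      _ = H.relIndex (H ⊔ M) * (M.relIndex H * Nat.card ↥(H ⊓ M)) := by rw [eq3]
  exact Nat.eq_of_mul_eq_mul_right (Nat.mul_pos hn hi) key

theorem hall_subgroup_of_normal {X : Type*} [Group X] [Finite X] (π : Set ℕ)
    (H : Subgroup X) (hH : IsHallPi π H)
    (M : Subgroup X) (hM : M.Normal) :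
    ∃ K : Subgroup M, IsHallPi π K := by
  refine ⟨H.subgroupOf M, ?_, ?_⟩
  · intro p hp hdvd
    apply hH.1 p hp
    refine hdvd.trans ?_
    rw [card_subgroupOf_eq]
    exact Subgroup.card_dvd_of_le inf_le_left
  · intro p hpπ hp hdvd
    apply hH.2 p hpπ hp
    refine hdvd.trans ?_
    show H.relIndex M ∣ H.index
    rw [relindex_eq_relindex_sup]
    exact Subgroup.relIndex_dvd_index_of_le le_sup_left
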